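/- Let (E, F) be a set system, y a point in P_F, μ ≥ 1, and η = min{c(F) : F ∈ F_y}, where F_y consists of all F ∈ F with χ^F on the minimal face of P_F containing y. Then for any T ∈ F_y satisfying (μ−1)·(c(T) − η) ≤ μ·(c^⊤ y − η), there exists a set U ∈ F_y in the ⌈2ρ(F_y)/μ⌉-neighborhood of T on the minimal face P_{F_y} with c(U) ≤ c^⊤ y, where ρ(F_y) = max{|F| : F ∈ F_y}. -/

import Mathlib

open scoped Classical symmDiff
set_option linter.unusedSectionVars false
set_option maxHeartbeats 1000000

noncomputable section

/-- Characteristic vector of a finite set. -/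
def chiF {E : Type*} [DecidableEq E] (F : Finset E) : E → ℝ :=
  fun e => if e ∈ F then 1 else 0

/-- Combinatorial polytope of a set system: the convex hull of characteristic vectors. -/
def combPolytope {E : Type*} [DecidableEq E] (𝓕 : Set (Finset E)) : Set (E → ℝ) :=
  convexHull ℝ (chiF '' 𝓕)

/-- Two points are adjacent vertices of `P` if they are distinct and the segment
between them is a face (extreme set) of `P`, i.e. an edge of the polytope. -/
def AdjVerts {E : Type*} (P : Set (E → ℝ)) (v w : E → ℝ) : Prop :=
  v ≠ w ∧ IsExtreme ℝ P (segment ℝ v w)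

/-- `w` is reachable from `v` by traversing at most `q` edges of the polytope `P`. -/
def ReachesIn {E : Type*} (P : Set (E → ℝ)) (q : ℕ) (v w : E → ℝ) : Prop :=
  ∃ n ≤ q, ∃ f : ℕ → E → ℝ,
    f 0 = v ∧ f n = w ∧ ∀ i < n, AdjVerts P (f i) (f (i + 1))

/-- The minimal face of `P` containing `y`: the intersection of all faces
(extreme sets) of `P` containing `y`. -/
def minFace {E : Type*} (P : Set (E → ℝ)) (y : E → ℝ) : Set (E → ℝ) :=
  ⋂₀ {A | IsExtreme ℝ P A ∧ y ∈ A}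

/-- The sets of the system whose characteristic vectors lie on the minimal face
of the combinatorial polytope containing `y`. -/
def faceFam {E : Type*} [DecidableEq E] (𝓕 : Set (Finset E)) (y : E → ℝ) :
    Set (Finset E) :=
  {F | F ∈ 𝓕 ∧ chiF F ∈ minFace (combPolytope 𝓕) y}

/-- Cost of a set: sum of the costs of its elements. -/
def cost {E : Type*} (c : E → ℝ) (F : Finset E) : ℝ := ∑ e ∈ F, c e

/-- Inner product `c^⊤ y`. -/
def dotc {E : Type*} [Fintype E] (c y : E → ℝ) : ℝ := ∑ e, c e * y e

section Aux

variable {E : Type*} [Fintype E] [DecidableEq E]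

lemma dotc_chiF (c : E → ℝ) (F : Finset E) : dotc c (chiF F) = cost c F := by
  unfold dotc chiF cost
  rw [Finset.sum_congr rfl (fun e _ => by rw [mul_ite, mul_one, mul_zero])]
  rw [Finset.sum_ite_mem, Finset.univ_inter]

lemma dotc_combo (g x z : E → ℝ) (a b : ℝ) :
    dotc g (a • x + b • z) = a * dotc g x + b * dotc g z := by
  simp only [dotc, Pi.add_apply, Pi.smul_apply, smul_eq_mul, mul_add, Finset.sum_add_distrib,
    Finset.mul_sum]
  congr 1 <;> exact Finset.sum_congr rfl (fun e _ => by ring)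

lemma dotc_sum {ι : Type*} (g : E → ℝ) (t : Finset ι) (w : ι → ℝ) (f : ι → E → ℝ) :
    dotc g (∑ i ∈ t, w i • f i) = ∑ i ∈ t, w i * dotc g (f i) := by
  unfold dotc
  simp only [Finset.sum_apply, Pi.smul_apply, smul_eq_mul, Finset.mul_sum]
  rw [Finset.sum_comm]
  exact Finset.sum_congr rfl fun i _ => Finset.sum_congr rfl fun e _ => by ring

lemma chiF_inj {F G : Finset E} (h : chiF F = chiF G) : F = G := by
  ext e
  have := congrFun h e
  by_cases hF : e ∈ F <;> by_cases hG : e ∈ G <;> simp [chiF, hF, hG] at this ⊢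

lemma dotc_le_hull {V : Set (E → ℝ)} {g : E → ℝ} {M : ℝ} (h : ∀ x ∈ V, dotc g x ≤ M) {z}
    (hz : z ∈ convexHull ℝ V) : dotc g z ≤ M := by
  have hconv : Convex ℝ {x : E → ℝ | dotc g x ≤ M} := by
    intro u hu v hv a b ha hb hab
    simp only [Set.mem_setOf_eq] at *
    rw [dotc_combo]
    have hm : a * M + b * M = M := by rw [← add_mul, hab, one_mul]
    nlinarith [mul_le_mul_of_nonneg_left hu ha, mul_le_mul_of_nonneg_left hv hb]
  exact convexHull_min h hconv hz

lemma dotc_ge_hull {V : Set (E → ℝ)} {g : E → ℝ} {M : ℝ} (h : ∀ x ∈ V, M ≤ dotc g x) {z}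
    (hz : z ∈ convexHull ℝ V) : M ≤ dotc g z := by
  have hconv : Convex ℝ {x : E → ℝ | M ≤ dotc g x} := by
    intro u hu v hv a b ha hb hab
    simp only [Set.mem_setOf_eq] at *
    rw [dotc_combo]
    have hm : a * M + b * M = M := by rw [← add_mul, hab, one_mul]
    nlinarith [mul_le_mul_of_nonneg_left hu ha, mul_le_mul_of_nonneg_left hv hb]
  exact convexHull_min h hconv hz

lemma dotc_eq_hull {V : Set (E → ℝ)} {g : E → ℝ} {M : ℝ} (h : ∀ x ∈ V, dotc g x = M) {z}
    (hz : z ∈ convexHull ℝ V) : dotc g z = M :=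
  le_antisymm (dotc_le_hull (fun x hx => (h x hx).le) hz)
    (dotc_ge_hull (fun x hx => (h x hx).ge) hz)

lemma hull_rep (V : Finset (E → ℝ)) {z} (hz : z ∈ convexHull ℝ (V : Set (E → ℝ))) :
    ∃ w : (E → ℝ) → ℝ, (∀ s ∈ V, 0 ≤ w s) ∧ ∑ s ∈ V, w s = 1 ∧ z = ∑ s ∈ V, w s • s := by
  rw [Finset.convexHull_eq] at hz
  obtain ⟨w, h0, h1, hx⟩ := hz
  refine ⟨w, h0, h1, ?_⟩
  rw [← hx, Finset.centerMass_eq_of_sum_1 _ _ h1]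
  simp

lemma rep_mem_hull {V : Set (E → ℝ)} (t : Finset (E → ℝ)) (w : (E → ℝ) → ℝ)
    (h0 : ∀ s ∈ t, 0 ≤ w s) (h1 : ∑ s ∈ t, w s = 1) (hmem : ∀ s ∈ t, s ∈ V) :
    (∑ s ∈ t, w s • s) ∈ convexHull ℝ V :=
  (convex_convexHull ℝ V).sum_mem h0 h1 (fun s hs => subset_convexHull ℝ V (hmem s hs))

lemma hull_rep_pos (V : Finset (E → ℝ)) {z} (hz : z ∈ convexHull ℝ (V : Set (E → ℝ))) :
    ∃ (t : Finset (E → ℝ)) (w : (E → ℝ) → ℝ), t ⊆ V ∧ (∀ s ∈ t, 0 < w s) ∧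
      ∑ s ∈ t, w s = 1 ∧ z = ∑ s ∈ t, w s • s := by
  obtain ⟨w, h0, h1, hrep⟩ := hull_rep V hz
  refine ⟨V.filter (fun s => w s ≠ 0), w, Finset.filter_subset _ _, ?_, ?_, ?_⟩
  · intro s hs
    obtain ⟨hsV, hsne⟩ := Finset.mem_filter.1 hs
    exact lt_of_le_of_ne (h0 _ hsV) (Ne.symm hsne)
  · rw [Finset.sum_filter_ne_zero]; exact h1
  · rw [hrep]
    refine (Finset.sum_filter_of_ne ?_).symm
    intro s _ hne hw0
    exact hne (by rw [hw0, zero_smul])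

end Aux


section Faces

variable {E : Type*} [Fintype E] [DecidableEq E]

lemma mem_face_hull (V : Finset (E → ℝ)) (g : E → ℝ) (M : ℝ)
    (hle : ∀ s ∈ V, dotc g s ≤ M) {z} (hz : z ∈ convexHull ℝ (V : Set (E → ℝ)))
    (hzM : dotc g z = M) :
    z ∈ convexHull ℝ ((V.filter (fun s => dotc g s = M) : Finset (E → ℝ)) : Set (E → ℝ)) := by
  obtain ⟨w, h0, h1, hrep⟩ := hull_rep V hz
  have hdz : ∑ s ∈ V, w s * dotc g s = M := by
    rw [hrep, dotc_sum g V w (fun s => s)] at hzM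
    exact hzM
  have hzero : ∀ s ∈ V, w s * (M - dotc g s) = 0 := by
    have hsum0 : ∑ s ∈ V, w s * (M - dotc g s) = 0 := by
      have : ∑ s ∈ V, w s * (M - dotc g s) = (∑ s ∈ V, w s) * M - ∑ s ∈ V, w s * dotc g s := by
        rw [Finset.sum_mul, ← Finset.sum_sub_distrib]
        exact Finset.sum_congr rfl fun s _ => by ring
      rw [this, h1, hdz, one_mul, sub_self]
    exact (Finset.sum_eq_zero_iff_of_nonneg (fun s hs =>
      mul_nonneg (h0 s hs) (sub_nonneg.2 (hle s hs)))).1 hsum0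
  have hkey : ∀ s ∈ V, s ∉ V.filter (fun s => dotc g s = M) → w s = 0 := by
    intro s hs hsf
    have hne : dotc g s ≠ M := by
      intro h; exact hsf (Finset.mem_filter.2 ⟨hs, h⟩)
    rcases mul_eq_zero.1 (hzero s hs) with h | h
    · exact h
    · exact absurd (by linarith [sub_eq_zero.1 h] : dotc g s = M) hne
  have hrep' : z = ∑ s ∈ V.filter (fun s => dotc g s = M), w s • s := by
    rw [hrep]
    refine (Finset.sum_subset (Finset.filter_subset _ _) ?_).symm
    intro s hs hsf
    rw [hkey s hs hsf, zero_smul]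
  have h1' : ∑ s ∈ V.filter (fun s => dotc g s = M), w s = 1 := by
    rw [← h1]
    exact Finset.sum_subset (Finset.filter_subset _ _) (fun s hs hsf => hkey s hs hsf)
  rw [hrep']
  exact rep_mem_hull _ w (fun s hs => h0 s (Finset.filter_subset _ _ hs)) h1'
    (fun s hs => hs)

lemma face_ext (V : Finset (E → ℝ)) (g : E → ℝ) (M : ℝ)
    (hle : ∀ s ∈ V, dotc g s ≤ M) :
    IsExtreme ℝ (convexHull ℝ (V : Set (E → ℝ)))
      (convexHull ℝ ((V.filter (fun s => dotc g s = M) : Finset (E → ℝ)) : Set (E → ℝ))) := by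
  constructor
  · exact convexHull_mono (by exact_mod_cast Finset.filter_subset _ _)
  · intro x₁ hx₁ x₂ hx₂ x hx hseg
    have hxM : dotc g x = M := by
      refine dotc_eq_hull (fun s hs => ?_) hx
      have hs' : s ∈ V.filter (fun s => dotc g s = M) := by exact_mod_cast hs
      exact (Finset.mem_filter.1 hs').2
    obtain ⟨a, b, ha, hb, hab, hx'⟩ := hseg
    have h1 : dotc g x₁ ≤ M := dotc_le_hull (fun s hs => hle s (by exact_mod_cast hs)) hx₁
    have h2 : dotc g x₂ ≤ M := dotc_le_hull (fun s hs => hle s (by exact_mod_cast hs)) hx₂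
    have hcomb : a * dotc g x₁ + b * dotc g x₂ = M := by
      rw [← dotc_combo, hx', hxM]
    have hm : a * M + b * M = M := by rw [← add_mul, hab, one_mul]
    have e1 : dotc g x₁ = M := by
      by_contra hne
      have hlt : dotc g x₁ < M := lt_of_le_of_ne h1 hne
      have := mul_lt_mul_of_pos_left hlt ha
      have := mul_le_mul_of_nonneg_left h2 hb.le
      linarith
    have e2 : dotc g x₂ = M := by
      by_contra hne
      have hlt : dotc g x₂ < M := lt_of_le_of_ne h2 hne
      have := mul_lt_mul_of_pos_left hlt hb
      have := mul_le_mul_of_nonneg_left h1 ha.le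
      linarith
    exact mem_face_hull V g M hle hx₁ e1

lemma absorb {P B : Set (E → ℝ)} (hP : Convex ℝ P) (hB : IsExtreme ℝ P B)
    (t : Finset (E → ℝ)) (w : (E → ℝ) → ℝ) (hpos : ∀ s ∈ t, 0 < w s)
    (h1 : ∑ s ∈ t, w s = 1) (htP : ∀ s ∈ t, s ∈ P)
    (hmem : (∑ s ∈ t, w s • s) ∈ B) : ∀ s ∈ t, s ∈ B := by
  intro s hs
  by_cases hcard : t = {s}
  · subst hcard
    have : w s = 1 := by simpa using h1
    simpa [this] using hmem
  · have hts : (t.erase s).Nonempty := by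
      rcases Finset.eq_empty_or_nonempty (t.erase s) with h | h
      · exfalso
        apply hcard
        apply Finset.eq_singleton_iff_unique_mem.2 ⟨hs, ?_⟩
        intro u hu
        by_contra hne
        exact (Finset.notMem_empty u) (h ▸ Finset.mem_erase.2 ⟨hne, hu⟩)
      · exact h
    set W := ∑ u ∈ t.erase s, w u with hWdef
    have hW : 0 < W := Finset.sum_pos (fun u hu => hpos u (Finset.mem_of_mem_erase hu)) hts
    have hws : w s + W = 1 := by
      rw [hWdef, Finset.add_sum_erase t w hs]; exact h1
    set m := W⁻¹ • ∑ u ∈ t.erase s, w u • u with hmdef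
    have hmP : m ∈ P := by
      have hm2 : m = ∑ u ∈ t.erase s, (W⁻¹ * w u) • u := by
        rw [hmdef, Finset.smul_sum]
        exact Finset.sum_congr rfl fun u _ => by rw [smul_smul]
      rw [hm2]
      refine hP.sum_mem (fun u hu => ?_) ?_ (fun u hu => htP u (Finset.mem_of_mem_erase hu))
      · exact mul_nonneg (inv_nonneg.2 hW.le) (hpos u (Finset.mem_of_mem_erase hu)).le
      · rw [← Finset.mul_sum, ← hWdef, inv_mul_cancel₀ hW.ne']
    have hseg : (∑ u ∈ t, w u • u) ∈ openSegment ℝ s m := by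
      refine ⟨w s, W, hpos s hs, hW, hws, ?_⟩
      rw [hmdef, smul_inv_smul₀ hW.ne']
      rw [Finset.add_sum_erase t (fun u => w u • u) hs]
    exact hB.2 (htP s hs) hmP hmem hseg

end Faces


section MinFaceLemmas

variable {E : Type*} [Fintype E] [DecidableEq E]

lemma mem_minFace_self {P : Set (E → ℝ)} {y : E → ℝ} (hy : y ∈ P) : y ∈ minFace P y :=
  Set.mem_sInter.2 fun _ hA => hA.2

lemma minFace_isExtreme {P : Set (E → ℝ)} {y : E → ℝ} (hy : y ∈ P) :
    IsExtreme ℝ P (minFace P y) := by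
  constructor
  · intro z hz
    exact Set.mem_sInter.1 hz P ⟨IsExtreme.rfl, hy⟩
  · intro x₁ h₁ x₂ h₂ x hx hseg
    refine Set.mem_sInter.2 fun A hA => ?_
    · exact (hA.1.2 h₁ h₂ (Set.mem_sInter.1 hx A hA) hseg)

lemma minFace_absorb {P : Set (E → ℝ)} {y z w : E → ℝ} (hy : y ∈ P) (hz : z ∈ P)
    (hw : w ∈ P) (h : y ∈ openSegment ℝ z w) : z ∈ minFace P y ∧ w ∈ minFace P y :=
  ⟨(minFace_isExtreme hy).2 hz hw (mem_minFace_self hy) h,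
    (minFace_isExtreme hy).right_mem_of_mem_openSegment hz hw (mem_minFace_self hy) h⟩

/-- The set of points `z` of `P` such that `y` lies in the relative interior of a segment
from `z`, together with `y` itself. This is the classical minimal face. -/
def polyF0 (P : Set (E → ℝ)) (y : E → ℝ) : Set (E → ℝ) :=
  {z | z ∈ P ∧ (z = y ∨ ∃ w ∈ P, y ∈ openSegment ℝ z w)}

lemma polyF0_aux {P : Set (E → ℝ)} (hP : Convex ℝ P) {x₁ x₂ wx : E → ℝ}
    (h1 : x₁ ∈ P) (h2 : x₂ ∈ P) (hw : wx ∈ P) {a b γ δ : ℝ}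
    (ha : 0 < a) (hb : 0 < b) (hab : a + b = 1) (hγ : 0 < γ) (hδ : 0 < δ) (hγδ : γ + δ = 1) :
    ∃ z ∈ P, a • (γ • x₁ + δ • x₂) + b • wx ∈ openSegment ℝ x₁ z := by
  have hδ1 : δ < 1 := by linarith
  have hlt : a * γ < 1 := by nlinarith
  have hpos : (0:ℝ) < 1 - a * γ := by linarith
  refine ⟨(1 - a * γ)⁻¹ • ((a * δ) • x₂ + b • wx), ?_, ?_⟩
  · have heq : (1 - a * γ)⁻¹ • ((a * δ) • x₂ + b • wx)
        = ((a * δ) / (1 - a * γ)) • x₂ + (b / (1 - a * γ)) • wx := by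
      rw [smul_add, smul_smul, smul_smul, div_eq_inv_mul, div_eq_inv_mul]
    rw [heq]
    refine hP h2 hw (by positivity) (by positivity) ?_
    field_simp
    nlinarith
  · refine ⟨a * γ, 1 - a * γ, by positivity, hpos, by ring, ?_⟩
    rw [smul_inv_smul₀ hpos.ne']
    module

lemma polyF0_isExtreme {P : Set (E → ℝ)} {y : E → ℝ} (hP : Convex ℝ P) (hy : y ∈ P) :
    IsExtreme ℝ P (polyF0 P y) := by
  constructor
  · exact fun z hz => hz.1
  · rintro x₁ h₁ x₂ h₂ x ⟨hxP, hx⟩ ⟨γ, δ, hγ, hδ, hγδ, hseg⟩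
    rcases hx with rfl | ⟨wx, hwP, a, b, ha, hb, hab, hy'⟩
    · exact ⟨h₁, Or.inr ⟨x₂, h₂, ⟨γ, δ, hγ, hδ, hγδ, hseg⟩⟩⟩
    · have hyx : a • (γ • x₁ + δ • x₂) + b • wx = y := by rw [hseg]; exact hy'
      have hyx' : a • (δ • x₂ + γ • x₁) + b • wx = y := by
        rw [add_comm (δ • x₂)]; exact hyx
      obtain ⟨z₁, hz₁P, hz₁⟩ := polyF0_aux hP h₁ h₂ hwP ha hb hab hγ hδ hγδ
      obtain ⟨z₂, hz₂P, hz₂⟩ := polyF0_aux hP h₂ h₁ hwP ha hb hab hδ hγ (by linarith)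
      rw [hyx] at hz₁
      rw [hyx'] at hz₂
      exact ⟨h₁, Or.inr ⟨z₁, hz₁P, hz₁⟩⟩

lemma minFace_subset_polyF0 {P : Set (E → ℝ)} {y : E → ℝ} (hP : Convex ℝ P) (hy : y ∈ P) :
    minFace P y ⊆ polyF0 P y :=
  fun _ hz => Set.mem_sInter.1 hz _ ⟨polyF0_isExtreme hP hy, ⟨hy, Or.inl rfl⟩⟩

end MinFaceLemmas


section FamD

variable {E : Type*} [Fintype E] [DecidableEq E]

/-- Convex hull of the characteristic vectors lying on the minimal face. -/
def famD (𝓕 : Set (Finset E)) (y : E → ℝ) : Set (E → ℝ) :=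
  convexHull ℝ (chiF '' faceFam 𝓕 y)

variable {𝓕 : Set (Finset E)} {y : E → ℝ}

lemma combPolytope_convex : Convex ℝ (combPolytope 𝓕) := convex_convexHull ℝ _

lemma chi_fam_subset_minFace :
    chiF '' faceFam 𝓕 y ⊆ minFace (combPolytope 𝓕) y := by
  rintro _ ⟨F, hF, rfl⟩; exact hF.2

lemma famD_subset_comb : famD 𝓕 y ⊆ combPolytope 𝓕 :=
  convexHull_mono (Set.image_mono (fun _ hF => hF.1))

/-- All characteristic vectors, as a finset of points. -/
def bigV (𝓕 : Set (Finset E)) : Finset (E → ℝ) := (Set.toFinite (chiF '' 𝓕)).toFinset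

lemma combPolytope_eq_hullV :
    combPolytope 𝓕 = convexHull ℝ ((bigV 𝓕 : Finset (E → ℝ)) : Set (E → ℝ)) := by
  unfold combPolytope bigV; rw [Set.Finite.coe_toFinset]

/-- The finset of characteristic vectors on the minimal face. -/
def famV (𝓕 : Set (Finset E)) (y : E → ℝ) : Finset (E → ℝ) :=
  (Set.toFinite (chiF '' faceFam 𝓕 y)).toFinset

lemma famD_eq_hullV :
    famD 𝓕 y = convexHull ℝ ((famV 𝓕 y : Finset (E → ℝ)) : Set (E → ℝ)) := by
  unfold famD famV; rw [Set.Finite.coe_toFinset]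

lemma mem_decomp {z : E → ℝ} (hz : z ∈ combPolytope 𝓕) :
    ∃ (t : Finset (E → ℝ)) (w : (E → ℝ) → ℝ), (∀ s ∈ t, s ∈ chiF '' 𝓕) ∧
      (∀ s ∈ t, 0 < w s) ∧ ∑ s ∈ t, w s = 1 ∧ z = ∑ s ∈ t, w s • s := by
  rw [combPolytope_eq_hullV] at hz
  obtain ⟨t, w, htV, hpos, h1, hrep⟩ := hull_rep_pos _ hz
  refine ⟨t, w, fun s hs => ?_, hpos, h1, hrep⟩
  have := htV hs
  rwa [bigV, Set.Finite.mem_toFinset] at this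

lemma decomp_points_fam (hy : y ∈ combPolytope 𝓕) {t : Finset (E → ℝ)} {w : (E → ℝ) → ℝ}
    (htX : ∀ s ∈ t, s ∈ chiF '' 𝓕) (hpos : ∀ s ∈ t, 0 < w s) (h1 : ∑ s ∈ t, w s = 1)
    (hrep : y = ∑ s ∈ t, w s • s) : ∀ s ∈ t, s ∈ chiF '' faceFam 𝓕 y := by
  intro s hs
  have hsM : s ∈ minFace (combPolytope 𝓕) y := by
    refine absorb combPolytope_convex (minFace_isExtreme hy) t w hpos h1
      (fun u hu => subset_convexHull ℝ _ (htX u hu)) ?_ s hs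
    rw [← hrep]; exact mem_minFace_self hy
  obtain ⟨F, hF, rfl⟩ := htX s hs
  exact ⟨F, ⟨hF, hsM⟩, rfl⟩

lemma y_mem_famD (hy : y ∈ combPolytope 𝓕) : y ∈ famD 𝓕 y := by
  obtain ⟨t, w, htX, hpos, h1, hrep⟩ := mem_decomp hy
  have hmem := rep_mem_hull t w (fun s hs => (hpos s hs).le) h1
    (decomp_points_fam hy htX hpos h1 hrep)
  exact hrep.symm ▸ hmem

lemma minFace_subset_famD (hy : y ∈ combPolytope 𝓕) :
    minFace (combPolytope 𝓕) y ⊆ famD 𝓕 y := by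
  intro z hz
  have hz0 := minFace_subset_polyF0 combPolytope_convex hy hz
  rcases hz0.2 with rfl | ⟨wz, hwzP, a, b, ha, hb, hab, hy'⟩
  · exact y_mem_famD hy
  · obtain ⟨t₁, w₁, ht₁, hpos₁, h11, hrep₁⟩ := mem_decomp hz0.1
    obtain ⟨t₂, w₂, ht₂, hpos₂, h12, hrep₂⟩ := mem_decomp hwzP
    set t := t₁ ∪ t₂ with htdef
    set w : (E → ℝ) → ℝ :=
      fun s => a * (if s ∈ t₁ then w₁ s else 0) + b * (if s ∈ t₂ then w₂ s else 0) with hwdef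
    have hwpos : ∀ s ∈ t, 0 < w s := by
      intro s hs
      have h1nn : 0 ≤ a * (if s ∈ t₁ then w₁ s else 0) := by
        split_ifs with h
        · exact mul_nonneg ha.le (hpos₁ s h).le
        · simp
      have h2nn : 0 ≤ b * (if s ∈ t₂ then w₂ s else 0) := by
        split_ifs with h
        · exact mul_nonneg hb.le (hpos₂ s h).le
        · simp
      rcases Finset.mem_union.1 hs with h | h
      · have : 0 < a * (if s ∈ t₁ then w₁ s else 0) := by
          rw [if_pos h]; exact mul_pos ha (hpos₁ s h)
        rw [hwdef]; dsimp only; linarith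
      · have : 0 < b * (if s ∈ t₂ then w₂ s else 0) := by
          rw [if_pos h]; exact mul_pos hb (hpos₂ s h)
        rw [hwdef]; dsimp only; linarith
    have hsum1 : ∑ s ∈ t, (if s ∈ t₁ then w₁ s else 0) = 1 := by
      rw [Finset.sum_ite_mem, Finset.union_inter_cancel_left]; exact h11
    have hsum2 : ∑ s ∈ t, (if s ∈ t₂ then w₂ s else 0) = 1 := by
      rw [Finset.sum_ite_mem, Finset.union_inter_cancel_right]; exact h12
    have hwsum : ∑ s ∈ t, w s = 1 := by
      rw [hwdef]
      dsimp only
      rw [Finset.sum_add_distrib, ← Finset.mul_sum, ← Finset.mul_sum, hsum1, hsum2]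
      linarith
    have hvec1 : ∑ s ∈ t, (if s ∈ t₁ then w₁ s else 0) • s = z := by
      have : ∀ s ∈ t, (if s ∈ t₁ then w₁ s else 0) • s
          = (if s ∈ t₁ then w₁ s • s else 0) := by
        intro s _; split_ifs <;> simp
      rw [Finset.sum_congr rfl this, Finset.sum_ite_mem, Finset.union_inter_cancel_left]
      exact hrep₁.symm
    have hvec2 : ∑ s ∈ t, (if s ∈ t₂ then w₂ s else 0) • s = wz := by
      have : ∀ s ∈ t, (if s ∈ t₂ then w₂ s else 0) • s
          = (if s ∈ t₂ then w₂ s • s else 0) := by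
        intro s _; split_ifs <;> simp
      rw [Finset.sum_congr rfl this, Finset.sum_ite_mem, Finset.union_inter_cancel_right]
      exact hrep₂.symm
    have hyrep : y = ∑ s ∈ t, w s • s := by
      have expand : ∀ s ∈ t, w s • s
          = a • ((if s ∈ t₁ then w₁ s else 0) • s) + b • ((if s ∈ t₂ then w₂ s else 0) • s) := by
        intro s _
        rw [hwdef]
        dsimp only
        rw [add_smul, smul_smul, smul_smul]
      rw [Finset.sum_congr rfl expand, Finset.sum_add_distrib, ← Finset.smul_sum,
        ← Finset.smul_sum, hvec1, hvec2, hy']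
    have htX : ∀ s ∈ t, s ∈ chiF '' 𝓕 := by
      intro s hs
      rcases Finset.mem_union.1 hs with h | h
      · exact ht₁ s h
      · exact ht₂ s h
    have hfam := decomp_points_fam hy htX hwpos hwsum hyrep
    rw [hrep₁]
    exact rep_mem_hull t₁ w₁ (fun s hs => (hpos₁ s hs).le) h11
      (fun s hs => hfam s (Finset.mem_union_left _ hs))

lemma famD_subset_minFace (hy : y ∈ combPolytope 𝓕) :
    famD 𝓕 y ⊆ minFace (combPolytope 𝓕) y := by
  intro z hz
  by_cases hzy : z = y
  · subst hzy; exact mem_minFace_self hy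
  have hzD := hz
  rw [famD_eq_hullV] at hz
  obtain ⟨t, w, htV, hpos, h1, hrep⟩ := hull_rep_pos _ hz
  have htne : t.Nonempty := by
    rcases Finset.eq_empty_or_nonempty t with h | h
    · exfalso; rw [h] at h1; simpa using h1
    · exact h
  have H : ∀ s ∈ t, ∃ ts : ℝ, 0 < ts ∧ ∀ τ : ℝ, 0 < τ → τ ≤ ts →
      y + τ • (y - s) ∈ combPolytope 𝓕 := by
    intro s hs
    have hsF : s ∈ chiF '' faceFam 𝓕 y := by
      have := htV hs
      rwa [famV, Set.Finite.mem_toFinset] at this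
    have hsMin : s ∈ minFace (combPolytope 𝓕) y := chi_fam_subset_minFace hsF
    have hsF0 : s ∈ polyF0 (combPolytope 𝓕) y :=
      minFace_subset_polyF0 combPolytope_convex hy hsMin
    have hsP : s ∈ combPolytope 𝓕 := hsF0.1
    rcases hsF0.2 with rfl | ⟨ws, hwsP, a, b, ha, hb, hab, hy'⟩
    · exact ⟨1, one_pos, fun τ _ _ => by simpa using hy⟩
    · refine ⟨a / b, by positivity, fun τ hτ hτle => ?_⟩
      have hb1 : b = 1 - a := by linarith
      have hkey : y + τ • (y - s) = (a - τ * b) • s + (b + τ * b) • ws := by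
        rw [← hy', hb1]; module
      rw [hkey]
      have hτb : τ * b ≤ a := by
        rw [div_eq_inv_mul] at hτle
        calc τ * b ≤ (b⁻¹ * a) * b := by
              exact mul_le_mul_of_nonneg_right hτle hb.le
          _ = a := by field_simp
      refine combPolytope_convex hsP hwsP (by linarith) (by nlinarith) (by linarith)
  choose! ts hts1 hts2 using H
  set τ0 := t.inf' htne ts with hτ0
  have hτ0pos : 0 < τ0 := by
    rw [hτ0, Finset.lt_inf'_iff]
    exact fun s hs => hts1 s hs
  have hqP : ∀ s ∈ t, y + τ0 • (y - s) ∈ combPolytope 𝓕 := fun s hs =>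
    hts2 s hs τ0 hτ0pos (Finset.inf'_le _ hs)
  have hw' : y + τ0 • (y - z) = ∑ s ∈ t, w s • (y + τ0 • (y - s)) := by
    have step1 : ∀ s ∈ t, w s • (y + τ0 • (y - s))
        = (w s * (1 + τ0)) • y - (τ0 * w s) • s := by
      intro s _; module
    rw [Finset.sum_congr rfl step1, Finset.sum_sub_distrib, ← Finset.sum_smul]
    have step2 : ∑ s ∈ t, (τ0 * w s) • s = τ0 • ∑ s ∈ t, w s • s := by
      rw [Finset.smul_sum]
      exact Finset.sum_congr rfl fun s _ => by rw [smul_smul]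
    rw [step2, ← hrep]
    have step3 : ∑ s ∈ t, w s * (1 + τ0) = 1 + τ0 := by
      rw [← Finset.sum_mul, h1, one_mul]
    rw [step3]
    module
  have hw'P : y + τ0 • (y - z) ∈ combPolytope 𝓕 := by
    rw [hw']
    exact combPolytope_convex.sum_mem (fun s hs => (hpos s hs).le) h1 hqP
  have h1τ : (0:ℝ) < 1 + τ0 := by linarith
  have hyseg : y ∈ openSegment ℝ z (y + τ0 • (y - z)) := by
    refine ⟨τ0 / (1 + τ0), 1 / (1 + τ0), by positivity, by positivity, by field_simp <;> ring, ?_⟩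
    have hinj : Function.Injective (fun v : E → ℝ => (1 + τ0) • v) :=
      smul_right_injective _ h1τ.ne'
    apply hinj
    dsimp only
    rw [smul_add, smul_smul, smul_smul]
    rw [mul_div_cancel₀ _ h1τ.ne', mul_one_div_cancel h1τ.ne']
    module
  have hzP : z ∈ combPolytope 𝓕 := famD_subset_comb hzD
  exact (minFace_absorb hy hzP hw'P hyseg).1

lemma famD_eq_minFace (hy : y ∈ combPolytope 𝓕) :
    famD 𝓕 y = minFace (combPolytope 𝓕) y :=
  le_antisymm (famD_subset_minFace hy) (minFace_subset_famD hy)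

end FamD


section Combinatorics

variable {E : Type*} [Fintype E] [DecidableEq E]

lemma symmDiff_nonempty_of_ne {u v : Finset E} (h : u ≠ v) : (u ∆ v).Nonempty := by
  rw [Finset.nonempty_iff_ne_empty]
  intro he
  apply h
  ext e
  constructor <;> intro hm <;> by_contra hn
  · exact (Finset.notMem_empty e) (he ▸ Finset.mem_symmDiff.2 (Or.inl ⟨hm, hn⟩))
  · exact (Finset.notMem_empty e) (he ▸ Finset.mem_symmDiff.2 (Or.inr ⟨hm, hn⟩))

lemma card_symmDiff_pos_of_ne {u v : Finset E} (h : u ≠ v) : 0 < (u ∆ v).card :=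
  Finset.card_pos.2 (symmDiff_nonempty_of_ne h)

lemma gsep_cost (v u : Finset E) :
    cost (fun e => if e ∈ v then (1:ℝ) else -1) u = ((u ∩ v).card : ℝ) - ((u \ v).card : ℝ) := by
  unfold cost
  rw [← Finset.sum_filter_add_sum_filter_not u (fun e => e ∈ v)]
  have h1 : ∑ e ∈ u.filter (fun e => e ∈ v), (if e ∈ v then (1:ℝ) else -1)
      = ((u ∩ v).card : ℝ) := by
    rw [Finset.sum_congr rfl (fun e he => if_pos (Finset.mem_filter.1 he).2)]
    rw [Finset.sum_const, Finset.filter_mem_eq_inter, nsmul_eq_mul, mul_one]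
  have h2 : ∑ e ∈ u.filter (fun e => ¬ e ∈ v), (if e ∈ v then (1:ℝ) else -1)
      = -((u \ v).card : ℝ) := by
    rw [Finset.sum_congr rfl (fun e he => if_neg (Finset.mem_filter.1 he).2)]
    rw [Finset.sum_const, ← Finset.sdiff_eq_filter, nsmul_eq_mul, mul_neg, mul_one]
  rw [h1, h2]
  ring

lemma card_symmDiff_split (v u : Finset E) :
    (v ∆ u).card = (v \ u).card + (u \ v).card := by
  rw [symmDiff_def]
  exact Finset.card_union_of_disjoint disjoint_sdiff_sdiff

lemma sep_gap (v u : Finset E) :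
    ((v.card : ℝ) - (((u ∩ v).card : ℝ) - ((u \ v).card : ℝ))) = ((v ∆ u).card : ℝ) := by
  have h1 : (v \ u).card + (v ∩ u).card = v.card := Finset.card_sdiff_add_card_inter v u
  have h2 : (v ∆ u).card = (v \ u).card + (u \ v).card := card_symmDiff_split v u
  have h3 : (u ∩ v).card = (v ∩ u).card := by rw [Finset.inter_comm]
  have hnat : v.card + (u \ v).card = (v ∆ u).card + (u ∩ v).card := by
    rw [h2, h3]; omega
  have := congrArg (Nat.cast : ℕ → ℝ) hnat
  push_cast at this
  linarith

lemma cost_g_split (m : ℝ) (v : Finset E) (e₀ : E) (u : Finset E) :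
    cost (fun e => m * (if e ∈ v then 1 else -1) + (if e = e₀ then 1 else 0)) u
      = m * (((u ∩ v).card : ℝ) - ((u \ v).card : ℝ)) + chiF u e₀ := by
  unfold cost
  rw [Finset.sum_add_distrib, ← Finset.mul_sum]
  congr 1
  · rw [← gsep_cost v u]; rfl
  · rw [Finset.sum_ite_eq' u e₀ (fun _ => (1:ℝ))]
    rfl

lemma cost_g_gap (m : ℝ) (v : Finset E) (e₀ : E) (u : Finset E) :
    cost (fun e => m * (if e ∈ v then 1 else -1) + (if e = e₀ then 1 else 0)) v
      - cost (fun e => m * (if e ∈ v then 1 else -1) + (if e = e₀ then 1 else 0)) u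
      = m * ((v ∆ u).card : ℝ) - (chiF u e₀ - chiF v e₀) := by
  rw [cost_g_split, cost_g_split]
  have hvv : ((v ∩ v).card : ℝ) - ((v \ v).card : ℝ) = (v.card : ℝ) := by
    rw [Finset.inter_self, Finset.sdiff_self]; simp
  rw [hvv]
  linear_combination m * sep_gap v u

lemma edge_extract {D : Set (E → ℝ)} (v : Finset E) :
    ∀ (n : ℕ) (A : Finset (Finset E)), A.card ≤ n → A.Nonempty → v ∉ A →
    IsExtreme ℝ D (convexHull ℝ (((insert v A).image chiF : Finset (E → ℝ)) : Set (E → ℝ))) →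
    ∃ u ∈ A, IsExtreme ℝ D (segment ℝ (chiF v) (chiF u)) := by
  intro n
  induction n with
  | zero =>
    intro A hcard hne hv _
    exact absurd (Finset.card_pos.2 hne) (by omega)
  | succ n IH =>
    intro A hcard hne hv hext
    by_cases hA1 : A.card = 1
    · obtain ⟨u, rfl⟩ := Finset.card_eq_one.1 hA1
      refine ⟨u, Finset.mem_singleton_self u, ?_⟩
      have himg : ((Finset.image chiF (insert v {u}) : Finset (E → ℝ)) : Set (E → ℝ))
          = {chiF v, chiF u} := by
        rw [Finset.image_insert, Finset.image_singleton, Finset.coe_insert,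
          Finset.coe_singleton]
      rw [himg, convexHull_pair] at hext
      exact hext
    · have hA2 : 1 < A.card := by
        have := Finset.card_pos.2 hne; omega
      obtain ⟨u₁, hu₁, u₂, hu₂, hu12⟩ := Finset.one_lt_card.1 hA2
      obtain ⟨e₀, he₀⟩ := symmDiff_nonempty_of_ne hu12
      set r : Finset E → ℝ := fun u => (chiF u e₀ - chiF v e₀) / ((v ∆ u).card : ℝ) with hr
      obtain ⟨u₀, hu₀A, hu₀max⟩ := Finset.exists_max_image A r hne
      set m := r u₀ with hm
      set g : E → ℝ := fun e => m * (if e ∈ v then 1 else -1) + (if e = e₀ then 1 else 0)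
        with hg
      set M := cost g v with hM
      have hgap : ∀ u : Finset E, cost g v - cost g u
          = m * ((v ∆ u).card : ℝ) - (chiF u e₀ - chiF v e₀) := fun u => cost_g_gap m v e₀ u
      have hcardpos : ∀ u ∈ A, (0:ℝ) < ((v ∆ u).card : ℝ) := by
        intro u huA
        exact_mod_cast card_symmDiff_pos_of_ne (fun h => hv (by rw [h]; exact huA))
      have hgap0 : ∀ u ∈ A, 0 ≤ cost g v - cost g u := by
        intro u huA
        rw [hgap u]
        have hru : r u ≤ m := hu₀max u huA
        rw [hr] at hru
        have := (div_le_iff₀ (hcardpos u huA)).1 hru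
        linarith
      have hle : ∀ s ∈ ((insert v A).image chiF : Finset (E → ℝ)), dotc g s ≤ M := by
        intro s hs
        obtain ⟨u, hu, rfl⟩ := Finset.mem_image.1 hs
        rw [dotc_chiF]
        rcases Finset.mem_insert.1 hu with rfl | huA
        · exact le_of_eq rfl
        · linarith [hgap0 u huA]
      set A2 := A.filter (fun u => r u = m) with hA2def
      have hfilter_eq : ((insert v A).image chiF).filter (fun s => dotc g s = M)
          = (insert v A2).image chiF := by
        ext x
        simp only [Finset.mem_filter, Finset.mem_image, Finset.mem_insert]
        constructor
        · rintro ⟨⟨u, hu, rfl⟩, hdx⟩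
          rcases hu with rfl | huA
          · exact ⟨u, Or.inl rfl, rfl⟩
          · refine ⟨u, Or.inr (Finset.mem_filter.2 ⟨huA, ?_⟩), rfl⟩
            rw [dotc_chiF] at hdx
            have h0 : m * ((v ∆ u).card : ℝ) - (chiF u e₀ - chiF v e₀) = 0 := by
              rw [← hgap u, hdx]; ring
            show (chiF u e₀ - chiF v e₀) / ((v ∆ u).card : ℝ) = m
            rw [div_eq_iff (hcardpos u huA).ne']
            linarith
        · rintro ⟨u, hu, rfl⟩
          rcases hu with rfl | huA2
          · exact ⟨⟨u, Or.inl rfl, rfl⟩, by rw [dotc_chiF]⟩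
          · obtain ⟨huA, hru⟩ := Finset.mem_filter.1 huA2
            refine ⟨⟨u, Or.inr huA, rfl⟩, ?_⟩
            rw [dotc_chiF]
            have hz : cost g v - cost g u = 0 := by
              rw [hgap u]
              have hru' : (chiF u e₀ - chiF v e₀) / ((v ∆ u).card : ℝ) = m := hru
              rw [div_eq_iff (hcardpos u huA).ne'] at hru'
              linarith
            linarith
      have hu₀A2 : u₀ ∈ A2 := Finset.mem_filter.2 ⟨hu₀A, rfl⟩
      have hk₁ : (0:ℝ) < ((v ∆ u₁).card : ℝ) := hcardpos u₁ hu₁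
      have hk₂ : (0:ℝ) < ((v ∆ u₂).card : ℝ) := hcardpos u₂ hu₂
      have hr12 : r u₁ ≠ r u₂ := by
        intro heq
        have heq0 : ((if e₀ ∈ u₁ then (1:ℝ) else 0) - (if e₀ ∈ v then (1:ℝ) else 0))
              / ((v ∆ u₁).card : ℝ)
            = ((if e₀ ∈ u₂ then (1:ℝ) else 0) - (if e₀ ∈ v then (1:ℝ) else 0))
              / ((v ∆ u₂).card : ℝ) := heq
        have heq' := (div_eq_div_iff hk₁.ne' hk₂.ne').1 heq0
        rcases Finset.mem_symmDiff.1 he₀ with ⟨h1, h2⟩ | ⟨h1, h2⟩ <;> by_cases hv₀ : e₀ ∈ v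
        · rw [if_pos h1, if_neg h2, if_pos hv₀] at heq'
          norm_num at heq'
          first
          | exact hv (by rw [heq']; exact hu₁)
          | exact hv (by rw [heq']; exact hu₂)
          | linarith
        · rw [if_pos h1, if_neg h2, if_neg hv₀] at heq'
          norm_num at heq'
          first
          | exact hv (by rw [heq']; exact hu₁)
          | exact hv (by rw [heq']; exact hu₂)
          | linarith
        · rw [if_pos h1, if_neg h2, if_pos hv₀] at heq'
          norm_num at heq'
          first
          | exact hv (by rw [heq']; exact hu₁)
          | exact hv (by rw [heq']; exact hu₂)
          | linarith
        · rw [if_pos h1, if_neg h2, if_neg hv₀] at heq'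
          norm_num at heq'
          first
          | exact hv (by rw [heq']; exact hu₁)
          | exact hv (by rw [heq']; exact hu₂)
          | linarith
      have hA2ss : A2 ⊂ A := by
        refine (Finset.ssubset_iff_of_subset (Finset.filter_subset _ _)).2 ?_
        have hne12 : r u₁ ≠ m ∨ r u₂ ≠ m := by
          by_contra hcon
          push_neg at hcon
          exact hr12 (hcon.1.trans hcon.2.symm)
        rcases hne12 with h | h
        · exact ⟨u₁, hu₁, fun hmem => h (Finset.mem_filter.1 hmem).2⟩
        · exact ⟨u₂, hu₂, fun hmem => h (Finset.mem_filter.1 hmem).2⟩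
      have hA2card : A2.card ≤ n := by
        have := Finset.card_lt_card hA2ss
        omega
      have hface := face_ext ((insert v A).image chiF) g M hle
      rw [hfilter_eq] at hface
      obtain ⟨u, huA2, hseg⟩ := IH A2 hA2card ⟨u₀, hu₀A2⟩
        (fun hvm => hv (Finset.filter_subset _ _ hvm)) (hext.trans hface)
      exact ⟨u, Finset.filter_subset _ _ huA2, hseg⟩

end Combinatorics


section StepLemma

variable {E : Type*} [Fintype E] [DecidableEq E] {𝓕 : Set (Finset E)} {y : E → ℝ} {c : E → ℝ}

lemma step_lemma (hy : y ∈ combPolytope 𝓕) {v w : Finset E} (hv : v ∈ faceFam 𝓕 y)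
    (hw : w ∈ faceFam 𝓕 y) (hcost : cost c w < cost c v) :
    ∃ u ∈ faceFam 𝓕 y, u ≠ v ∧ v ∩ w ⊆ u ∧ u ⊆ v ∪ w ∧
      IsExtreme ℝ (minFace (combPolytope 𝓕) y) (segment ℝ (chiF v) (chiF u)) ∧
      (cost c v - cost c u) * ((v ∆ w).card : ℝ) ≥ cost c v - cost c w := by
  classical
  set FamF : Finset (Finset E) := (Set.toFinite (faceFam 𝓕 y)).toFinset with hFamF
  have hmemFamF : ∀ {u : Finset E}, u ∈ FamF ↔ u ∈ faceFam 𝓕 y := by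
    intro u; rw [hFamF, Set.Finite.mem_toFinset]
  have hDhull : famD 𝓕 y
      = convexHull ℝ ((FamF.image chiF : Finset (E → ℝ)) : Set (E → ℝ)) := by
    unfold famD
    congr 1
    rw [Finset.coe_image, hFamF, Set.Finite.coe_toFinset]
  have hvw : v ≠ w := fun h => absurd (h ▸ hcost) (lt_irrefl _)
  -- ## Stage 1: the conformal face
  set g₁ : E → ℝ := fun e => if e ∈ v ∩ w then 1 else if e ∈ v ∪ w then 0 else -1 with hg₁
  have hcost₁ : ∀ u : Finset E,
      cost g₁ u = ((u ∩ (v ∩ w)).card : ℝ) - ((u \ (v ∪ w)).card : ℝ) := by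
    intro u
    unfold cost
    rw [← Finset.sum_filter_add_sum_filter_not u (fun e => e ∈ v ∩ w)]
    have h1 : ∑ e ∈ u.filter (fun e => e ∈ v ∩ w), g₁ e = ((u ∩ (v ∩ w)).card : ℝ) := by
      rw [Finset.sum_congr rfl (fun e he => ?_), Finset.sum_const,
        Finset.filter_mem_eq_inter, nsmul_eq_mul, mul_one]
      show g₁ e = 1
      rw [hg₁]
      exact if_pos (Finset.mem_filter.1 he).2
    have h2 : ∑ e ∈ u.filter (fun e => ¬ e ∈ v ∩ w), g₁ e = -((u \ (v ∪ w)).card : ℝ) := by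
      rw [← Finset.sum_filter_add_sum_filter_not (u.filter (fun e => ¬ e ∈ v ∩ w))
        (fun e => e ∈ v ∪ w)]
      have ha : ∑ e ∈ (u.filter (fun e => ¬ e ∈ v ∩ w)).filter (fun e => e ∈ v ∪ w),
          g₁ e = 0 := by
        refine Finset.sum_eq_zero fun e he => ?_
        obtain ⟨he1, he2⟩ := Finset.mem_filter.1 he
        obtain ⟨_, he3⟩ := Finset.mem_filter.1 he1
        show g₁ e = 0
        rw [hg₁]
        dsimp only
        rw [if_neg he3, if_pos he2]
      have hb : (u.filter (fun e => ¬ e ∈ v ∩ w)).filter (fun e => ¬ e ∈ v ∪ w)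
          = u \ (v ∪ w) := by
        ext e
        simp only [Finset.mem_filter, Finset.mem_sdiff, Finset.mem_inter, Finset.mem_union]
        tauto
      have hc : ∑ e ∈ (u.filter (fun e => ¬ e ∈ v ∩ w)).filter (fun e => ¬ e ∈ v ∪ w),
          g₁ e = -((u \ (v ∪ w)).card : ℝ) := by
        rw [hb, Finset.sum_congr rfl (fun e he => ?_), Finset.sum_const, nsmul_eq_mul,
          mul_neg, mul_one]
        show g₁ e = -1
        rw [hg₁]
        dsimp only
        obtain ⟨_, he2⟩ := Finset.mem_sdiff.1 he
        rw [if_neg (fun hh => he2 (Finset.mem_union_left _ (Finset.mem_inter.1 hh).1)),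
          if_neg he2]
      rw [ha, hc, zero_add]
    rw [h1, h2]
    ring
  set M₁ : ℝ := ((v ∩ w).card : ℝ) with hM₁
  have hconf_le : ∀ u : Finset E, cost g₁ u ≤ M₁ := by
    intro u
    rw [hcost₁ u, hM₁]
    have h1 : (u ∩ (v ∩ w)).card ≤ (v ∩ w).card :=
      Finset.card_le_card (Finset.inter_subset_right)
    have h2 : (0:ℝ) ≤ ((u \ (v ∪ w)).card : ℝ) := by positivity
    have h1' : ((u ∩ (v ∩ w)).card : ℝ) ≤ ((v ∩ w).card : ℝ) := by exact_mod_cast h1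
    linarith
  have hconf_iff : ∀ u : Finset E, cost g₁ u = M₁ ↔ (v ∩ w ⊆ u ∧ u ⊆ v ∪ w) := by
    intro u
    constructor
    · intro hEq
      rw [hcost₁ u, hM₁] at hEq
      have h1 : (u ∩ (v ∩ w)).card ≤ (v ∩ w).card :=
        Finset.card_le_card (Finset.inter_subset_right)
      have h1' : ((u ∩ (v ∩ w)).card : ℝ) ≤ ((v ∩ w).card : ℝ) := by exact_mod_cast h1
      have h2 : (0:ℝ) ≤ ((u \ (v ∪ w)).card : ℝ) := by positivity
      have hcardeq : ((u ∩ (v ∩ w)).card : ℝ) = ((v ∩ w).card : ℝ) := by linarith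
      have hzero : ((u \ (v ∪ w)).card : ℝ) = 0 := by linarith
      constructor
      · have : u ∩ (v ∩ w) = v ∩ w := by
          apply Finset.eq_of_subset_of_card_le Finset.inter_subset_right
          exact_mod_cast hcardeq.ge
        intro e he
        have : e ∈ u ∩ (v ∩ w) := this.symm ▸ he
        exact (Finset.mem_inter.1 this).1
      · have : (u \ (v ∪ w)).card = 0 := by exact_mod_cast hzero
        have hempty : u \ (v ∪ w) = ∅ := Finset.card_eq_zero.1 this
        intro e he
        by_contra hne
        exact (Finset.notMem_empty e) (hempty ▸ Finset.mem_sdiff.2 ⟨he, hne⟩)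
    · rintro ⟨hsub1, hsub2⟩
      rw [hcost₁ u, hM₁]
      have e1 : u ∩ (v ∩ w) = v ∩ w := Finset.inter_eq_right.2 hsub1
      have e2 : u \ (v ∪ w) = ∅ := Finset.sdiff_eq_empty_iff_subset.2 hsub2
      rw [e1, e2]
      simp
  set S₁ : Finset (Finset E) := FamF.filter (fun u => v ∩ w ⊆ u ∧ u ⊆ v ∪ w) with hS₁
  have hvS₁ : v ∈ S₁ := Finset.mem_filter.2 ⟨hmemFamF.2 hv,
    ⟨Finset.inter_subset_left, Finset.subset_union_left⟩⟩
  have hwS₁ : w ∈ S₁ := Finset.mem_filter.2 ⟨hmemFamF.2 hw,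
    ⟨Finset.inter_subset_right, Finset.subset_union_right⟩⟩
  have hle₁ : ∀ s ∈ FamF.image chiF, dotc g₁ s ≤ M₁ := by
    intro s hs
    obtain ⟨u, _, rfl⟩ := Finset.mem_image.1 hs
    rw [dotc_chiF]
    exact hconf_le u
  have hfilter₁ : (FamF.image chiF).filter (fun s => dotc g₁ s = M₁) = S₁.image chiF := by
    ext x
    simp only [Finset.mem_filter, Finset.mem_image]
    constructor
    · rintro ⟨⟨u, hu, rfl⟩, hdx⟩
      rw [dotc_chiF] at hdx
      exact ⟨u, Finset.mem_filter.2 ⟨hu, (hconf_iff u).1 hdx⟩, rfl⟩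
    · rintro ⟨u, hu, rfl⟩
      obtain ⟨huF, hconf⟩ := Finset.mem_filter.1 hu
      exact ⟨⟨u, huF, rfl⟩, by rw [dotc_chiF]; exact (hconf_iff u).2 hconf⟩
  have hface₁ : IsExtreme ℝ (famD 𝓕 y)
      (convexHull ℝ ((S₁.image chiF : Finset (E → ℝ)) : Set (E → ℝ))) := by
    rw [hDhull, ← hfilter₁]
    exact face_ext (FamF.image chiF) g₁ M₁ hle₁
  -- ## Stage 2: the steepest-ratio face
  set A₀ : Finset (Finset E) := S₁.filter (fun u => cost c u < cost c v) with hA₀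
  have hwA₀ : w ∈ A₀ := Finset.mem_filter.2 ⟨hwS₁, hcost⟩
  have hvA₀ : v ∉ A₀ := fun h => absurd (Finset.mem_filter.1 h).2 (lt_irrefl _)
  have hcardpos : ∀ u ∈ A₀, (0:ℝ) < ((v ∆ u).card : ℝ) := by
    intro u hu
    have hne : v ≠ u := fun h => absurd (h ▸ (Finset.mem_filter.1 hu).2) (lt_irrefl _)
    exact_mod_cast card_symmDiff_pos_of_ne hne
  set ρr : Finset E → ℝ := fun u => (cost c v - cost c u) / ((v ∆ u).card : ℝ) with hρr
  obtain ⟨u₀, hu₀, hmax⟩ := Finset.exists_max_image A₀ ρr ⟨w, hwA₀⟩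
  set lam : ℝ := ρr u₀ with hlam
  have hlam_pos : 0 < lam := by
    have h1 : ρr w ≤ lam := hmax w hwA₀
    have h2 : 0 < ρr w := by
      rw [hρr]
      exact div_pos (by linarith) (hcardpos w hwA₀)
    linarith
  have hlam_mul : ∀ u ∈ A₀, cost c v - cost c u ≤ lam * ((v ∆ u).card : ℝ) := by
    intro u hu
    have h1 : ρr u ≤ lam := hmax u hu
    have h2 : (cost c v - cost c u) / ((v ∆ u).card : ℝ) ≤ lam := h1
    rw [div_le_iff₀ (hcardpos u hu)] at h2
    linarith [h2]
  have hlam_w : cost c v - cost c w ≤ lam * ((v ∆ w).card : ℝ) := hlam_mul w hwA₀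
  set g₂ : E → ℝ := fun e => lam * (if e ∈ v then 1 else -1) - c e with hg₂
  have hcost₂ : ∀ u : Finset E,
      cost g₂ u = lam * (((u ∩ v).card : ℝ) - ((u \ v).card : ℝ)) - cost c u := by
    intro u
    show (∑ e ∈ u, (lam * (if e ∈ v then 1 else -1) - c e)) = _
    rw [Finset.sum_sub_distrib, ← Finset.mul_sum]
    rw [show (∑ e ∈ u, (if e ∈ v then (1:ℝ) else -1)) = cost (fun e => if e ∈ v then (1:ℝ) else -1) u from rfl]
    rw [gsep_cost]
    rfl
  have hgap₂ : ∀ u : Finset E, cost g₂ v - cost g₂ u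
      = lam * ((v ∆ u).card : ℝ) - (cost c v - cost c u) := by
    intro u
    rw [hcost₂ v, hcost₂ u]
    have hvv : ((v ∩ v).card : ℝ) - ((v \ v).card : ℝ) = (v.card : ℝ) := by
      rw [Finset.inter_self, Finset.sdiff_self]; simp
    rw [hvv]
    linear_combination lam * sep_gap v u
  set M₂ : ℝ := cost g₂ v with hM₂
  have hle₂ : ∀ s ∈ S₁.image chiF, dotc g₂ s ≤ M₂ := by
    intro s hs
    obtain ⟨u, huS₁, rfl⟩ := Finset.mem_image.1 hs
    rw [dotc_chiF]
    by_cases huv : u = v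
    · subst huv; exact le_rfl
    · have hkpos : (0:ℝ) < ((v ∆ u).card : ℝ) := by
        exact_mod_cast card_symmDiff_pos_of_ne (fun h => huv h.symm)
      by_cases hcu : cost c u < cost c v
      · have huA₀ : u ∈ A₀ := Finset.mem_filter.2 ⟨huS₁, hcu⟩
        have := hlam_mul u huA₀
        have hgap := hgap₂ u
        linarith
      · have hgap := hgap₂ u
        nlinarith [mul_pos hlam_pos hkpos]
  set A : Finset (Finset E) :=
    A₀.filter (fun u => cost c v - cost c u = lam * ((v ∆ u).card : ℝ)) with hA
  have hu₀A : u₀ ∈ A := by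
    refine Finset.mem_filter.2 ⟨hu₀, ?_⟩
    have : (cost c v - cost c u₀) / ((v ∆ u₀).card : ℝ) = lam := rfl
    rw [div_eq_iff (hcardpos u₀ hu₀).ne'] at this
    linarith [this]
  have hvA : v ∉ A := fun h => hvA₀ (Finset.filter_subset _ _ h)
  have hfilter₂ : (S₁.image chiF).filter (fun s => dotc g₂ s = M₂)
      = (insert v A).image chiF := by
    ext x
    simp only [Finset.mem_filter, Finset.mem_image, Finset.mem_insert]
    constructor
    · rintro ⟨⟨u, huS₁, rfl⟩, hdx⟩
      rw [dotc_chiF] at hdx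
      by_cases huv : u = v
      · exact ⟨u, Or.inl huv, rfl⟩
      · have hkpos : (0:ℝ) < ((v ∆ u).card : ℝ) := by
          exact_mod_cast card_symmDiff_pos_of_ne (fun h => huv h.symm)
        have hgap := hgap₂ u
        have h0 : cost c v - cost c u = lam * ((v ∆ u).card : ℝ) := by
          rw [hM₂] at hdx
          linarith
        have hcu : cost c u < cost c v := by nlinarith [mul_pos hlam_pos hkpos]
        exact ⟨u, Or.inr (Finset.mem_filter.2 ⟨Finset.mem_filter.2 ⟨huS₁, hcu⟩, h0⟩), rfl⟩
    · rintro ⟨u, hu, rfl⟩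
      rcases hu with rfl | huA
      · exact ⟨⟨u, hvS₁, rfl⟩, by rw [dotc_chiF]⟩
      · obtain ⟨huA₀, heq⟩ := Finset.mem_filter.1 huA
        have huS₁ : u ∈ S₁ := Finset.filter_subset _ _ huA₀
        refine ⟨⟨u, huS₁, rfl⟩, ?_⟩
        rw [dotc_chiF]
        have hgap := hgap₂ u
        rw [hM₂]
        linarith
  have hface₂ : IsExtreme ℝ (famD 𝓕 y)
      (convexHull ℝ (((insert v A).image chiF : Finset (E → ℝ)) : Set (E → ℝ))) := by
    have := face_ext (S₁.image chiF) g₂ M₂ hle₂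
    rw [hfilter₂] at this
    exact hface₁.trans this
  -- ## Stage 3: extract an edge
  obtain ⟨u, huA, hseg⟩ := edge_extract v A.card A le_rfl ⟨u₀, hu₀A⟩ hvA hface₂
  obtain ⟨huA₀, hueq⟩ := Finset.mem_filter.1 huA
  obtain ⟨huS₁, hulttop⟩ := Finset.mem_filter.1 huA₀
  obtain ⟨huF, huconf⟩ := Finset.mem_filter.1 huS₁
  have huFam : u ∈ faceFam 𝓕 y := hmemFamF.1 huF
  have huv : u ≠ v := fun h => absurd (h ▸ hulttop) (lt_irrefl _)
  have hkpos : (1:ℝ) ≤ ((v ∆ u).card : ℝ) := by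
    exact_mod_cast card_symmDiff_pos_of_ne (fun h => huv h.symm)
  have hwcard : (0:ℝ) ≤ ((v ∆ w).card : ℝ) := by positivity
  refine ⟨u, huFam, huv, huconf.1, huconf.2, ?_, ?_⟩
  · rw [← famD_eq_minFace hy]
    exact hseg
  · have h1 : cost c v - cost c u = lam * ((v ∆ u).card : ℝ) := hueq
    have h2 : lam ≤ cost c v - cost c u := by nlinarith
    nlinarith

end StepLemma


section Walk

variable {E : Type*} [Fintype E] [DecidableEq E] {𝓕 : Set (Finset E)} {y : E → ℝ} {c : E → ℝ}

lemma reaches_refl (P : Set (E → ℝ)) (q : ℕ) (v : E → ℝ) : ReachesIn P q v v :=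
  ⟨0, Nat.zero_le _, fun _ => v, rfl, rfl, fun i hi => absurd hi (Nat.not_lt_zero i)⟩

lemma reaches_cons {P : Set (E → ℝ)} {q : ℕ} {v u w : E → ℝ}
    (hadj : AdjVerts P v u) (hre : ReachesIn P q u w) : ReachesIn P (q + 1) v w := by
  obtain ⟨n, hn, f, h0, hnn, hsteps⟩ := hre
  refine ⟨n + 1, by omega, fun i => if i = 0 then v else f (i - 1), rfl, ?_, ?_⟩
  · show (if n + 1 = 0 then v else f (n + 1 - 1)) = w
    have hne : n + 1 ≠ 0 := by omega
    rw [if_neg hne]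
    have h2 : n + 1 - 1 = n := by omega
    rw [h2]
    exact hnn
  · intro i hi
    by_cases h0i : i = 0
    · subst h0i
      have h1 : (1 : ℕ) ≠ 0 := one_ne_zero
      simp only [if_pos rfl, if_neg h1]
      have : f (1 - 1) = u := by rw [Nat.sub_self]; exact h0
      rw [this]
      exact hadj
    · have hlt : i - 1 < n := by omega
      have hne1 : i + 1 ≠ 0 := by omega
      simp only [if_neg h0i, if_neg hne1]
      have h2 : i + 1 - 1 = (i - 1) + 1 := by omega
      rw [h2]
      exact hsteps (i - 1) hlt

lemma main_walk (hy : y ∈ combPolytope 𝓕) (γ : ℝ) :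
    ∀ (h : ℕ) (v w : Finset E), v ∈ faceFam 𝓕 y → w ∈ faceFam 𝓕 y → cost c w ≤ γ →
      (v ∆ w).card = h → ∀ k : ℕ,
      (h : ℝ) * (cost c v - γ) ≤ (k : ℝ) * (cost c v - cost c w) →
      ∃ u ∈ faceFam 𝓕 y, cost c u ≤ γ ∧
        ReachesIn (minFace (combPolytope 𝓕) y) k (chiF v) (chiF u) := by
  intro h
  induction h using Nat.strong_induction_on with
  | _ h IH =>
  intro v w hv hw hwγ hcard k hineq
  by_cases hvγ : cost c v ≤ γ
  · exact ⟨v, hv, hvγ, reaches_refl _ _ _⟩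
  push_neg at hvγ
  have hΔpos : 0 < cost c v - γ := by linarith
  have ha : 0 < cost c v - cost c w := by linarith
  have hvw : v ≠ w := by
    intro hh
    rw [hh] at hvγ
    linarith
  have hh0 : 0 < h := hcard ▸ card_symmDiff_pos_of_ne hvw
  have hh0R : (1:ℝ) ≤ (h : ℝ) := by exact_mod_cast hh0
  have hk0 : 0 < k := by
    by_contra hk
    push_neg at hk
    have hk' : k = 0 := by omega
    rw [hk'] at hineq
    push_cast at hineq
    nlinarith
  have hk0R : (1:ℝ) ≤ (k : ℝ) := by exact_mod_cast hk0
  obtain ⟨u₀, hu₀fam, hu₀ne, hconf1, hconf2, hext, hdec⟩ := step_lemma hy hv hw (by linarith)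
  have hadj : AdjVerts (minFace (combPolytope 𝓕) y) (chiF v) (chiF u₀) :=
    ⟨fun hh => hu₀ne (chiF_inj hh).symm, hext⟩
  have hδcard : (cost c v - cost c u₀) * (h : ℝ) ≥ cost c v - cost c w := by
    rw [hcard] at hdec
    exact hdec
  have hsub : u₀ ∆ w ⊆ v ∆ w := by
    intro e he
    rcases Finset.mem_symmDiff.1 he with ⟨h1, h2⟩ | ⟨h1, h2⟩
    · have hevw : e ∈ v ∪ w := hconf2 h1
      have hev : e ∈ v := by
        rcases Finset.mem_union.1 hevw with h' | h'
        · exact h'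
        · exact absurd h' h2
      exact Finset.mem_symmDiff.2 (Or.inl ⟨hev, h2⟩)
    · have hevn : e ∉ v := fun hev => h2 (hconf1 (Finset.mem_inter.2 ⟨hev, h1⟩))
      exact Finset.mem_symmDiff.2 (Or.inr ⟨h1, hevn⟩)
  have hproper : ∃ e, e ∈ v ∆ w ∧ e ∉ u₀ ∆ w := by
    obtain ⟨e, he⟩ := symmDiff_nonempty_of_ne hu₀ne
    rcases Finset.mem_symmDiff.1 he with ⟨h1, h2⟩ | ⟨h1, h2⟩
    · have hew : e ∈ w := by
        rcases Finset.mem_union.1 (hconf2 h1) with h' | h'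
        · exact absurd h' h2
        · exact h'
      refine ⟨e, Finset.mem_symmDiff.2 (Or.inr ⟨hew, h2⟩), fun hmem => ?_⟩
      rcases Finset.mem_symmDiff.1 hmem with ⟨_, hq⟩ | ⟨_, hq⟩
      · exact hq hew
      · exact hq h1
    · have hew : e ∉ w := fun hew => h2 (hconf1 (Finset.mem_inter.2 ⟨h1, hew⟩))
      refine ⟨e, Finset.mem_symmDiff.2 (Or.inl ⟨h1, hew⟩), fun hmem => ?_⟩
      rcases Finset.mem_symmDiff.1 hmem with ⟨hq, _⟩ | ⟨hq, _⟩
      · exact h2 hq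
      · exact hew hq
  have hssub : u₀ ∆ w ⊂ v ∆ w := by
    obtain ⟨e, he1, he2⟩ := hproper
    exact (Finset.ssubset_iff_of_subset hsub).2 ⟨e, he1, he2⟩
  have hh' : (u₀ ∆ w).card < h := hcard ▸ Finset.card_lt_card hssub
  by_cases hu₀γ : cost c u₀ ≤ γ
  · refine ⟨u₀, hu₀fam, hu₀γ, ?_⟩
    have hr := reaches_cons hadj (reaches_refl (minFace (combPolytope 𝓕) y) (k - 1) (chiF u₀))
    rwa [Nat.sub_add_cancel hk0] at hr
  push_neg at hu₀γ
  have hΔ'pos : 0 < cost c u₀ - γ := by linarith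
  have hkm1 : ((k - 1 : ℕ) : ℝ) = (k : ℝ) - 1 := by
    rw [Nat.cast_sub hk0]
    norm_num
  have hCle : ((u₀ ∆ w).card : ℝ) + 1 ≤ (h : ℝ) := by exact_mod_cast hh'
  have hCge : (0:ℝ) ≤ ((u₀ ∆ w).card : ℝ) := by positivity
  have hkey : ((u₀ ∆ w).card : ℝ) * (cost c u₀ - γ)
      ≤ ((k - 1 : ℕ) : ℝ) * (cost c u₀ - cost c w) := by
    rw [hkm1]
    set Δ := cost c v - γ with hΔdef
    set a := cost c v - cost c w with hadef
    set δ := cost c v - cost c u₀ with hδdef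
    have hgoalform : cost c u₀ - γ = Δ - δ := by rw [hΔdef, hδdef]; ring
    have hgoalform2 : cost c u₀ - cost c w = a - δ := by rw [hadef, hδdef]; ring
    rw [hgoalform, hgoalform2]
    rcases le_or_gt (k : ℝ) (h : ℝ) with hkh | hkh
    · -- tight case: polynomial identity
      have t1 : (0:ℝ) ≤ ((h:ℝ) - 1) * ((k:ℝ) * a - (h:ℝ) * Δ) :=
        mul_nonneg (by linarith) (by linarith [hineq])
      have t2 : (0:ℝ) ≤ ((h:ℝ) - (k:ℝ)) * (δ * (h:ℝ) - a) :=
        mul_nonneg (by linarith) (by linarith [hδcard])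
      have hident : (h:ℝ) * (((k:ℝ) - 1) * (a - δ) - ((h:ℝ) - 1) * (Δ - δ))
          = ((h:ℝ) - 1) * ((k:ℝ) * a - (h:ℝ) * Δ) + ((h:ℝ) - (k:ℝ)) * (δ * (h:ℝ) - a) := by
        ring
      have hge : (0:ℝ) ≤ (h:ℝ) * (((k:ℝ) - 1) * (a - δ) - ((h:ℝ) - 1) * (Δ - δ)) := by
        rw [hident]; linarith
      have hpos : (0:ℝ) < (h:ℝ) := by linarith
      have hfin : (0:ℝ) ≤ ((k:ℝ) - 1) * (a - δ) - ((h:ℝ) - 1) * (Δ - δ) := by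
        by_contra hneg
        push_neg at hneg
        have := mul_neg_of_pos_of_neg hpos hneg
        linarith
      have hΔδ : 0 < Δ - δ := by rw [← hgoalform]; exact hΔ'pos
      have hstep : ((u₀ ∆ w).card : ℝ) * (Δ - δ) ≤ ((h:ℝ) - 1) * (Δ - δ) :=
        mul_le_mul_of_nonneg_right (by linarith) hΔδ.le
      linarith
    · -- k > h
      have hC : ((u₀ ∆ w).card : ℝ) ≤ (k:ℝ) - 1 := by linarith
      have hΔδ : 0 < Δ - δ := by rw [← hgoalform]; exact hΔ'pos
      have haδ : Δ - δ ≤ a - δ := by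
        rw [hΔdef, hadef]
        linarith
      nlinarith
  obtain ⟨U, hU, hUγ, hreach⟩ := IH (u₀ ∆ w).card hh' u₀ w hu₀fam hw hwγ rfl (k - 1) hkey
  refine ⟨U, hU, hUγ, ?_⟩
  have hr := reaches_cons hadj hreach
  rwa [Nat.sub_add_cancel hk0] at hr

end Walk

theorem stmt3 {E : Type*} [Fintype E] [DecidableEq E]
    (𝓕 : Set (Finset E)) (c : E → ℝ)
    (y : E → ℝ) (hy : y ∈ combPolytope 𝓕)
    (μ : ℝ) (hμ : 1 ≤ μ)
    (η : ℝ) (hηlb : ∀ F ∈ faceFam 𝓕 y, η ≤ cost c F)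
    (hηmem : ∃ F ∈ faceFam 𝓕 y, cost c F = η)
    (ρ : ℕ) (hρub : ∀ F ∈ faceFam 𝓕 y, F.card ≤ ρ)
    (hρmem : ∃ F ∈ faceFam 𝓕 y, F.card = ρ)
    (T : Finset E) (hT : T ∈ faceFam 𝓕 y)
    (hTcost : (μ - 1) * (cost c T - η) ≤ μ * (dotc c y - η)) :
    ∃ U ∈ faceFam 𝓕 y,
      ReachesIn (minFace (combPolytope 𝓕) y) ⌈(2 * (ρ : ℝ)) / μ⌉₊ (chiF T) (chiF U) ∧
      cost c U ≤ dotc c y := by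
  classical
  obtain ⟨wstar, hwstar, hwcost⟩ := hηmem
  have hycomb : y ∈ famD 𝓕 y := y_mem_famD hy
  have hηy : η ≤ dotc c y := by
    refine dotc_ge_hull (V := chiF '' faceFam 𝓕 y) ?_ hycomb
    rintro x ⟨F, hF, rfl⟩
    rw [dotc_chiF]
    exact hηlb F hF
  set γ := dotc c y with hγ
  have hwγ : cost c wstar ≤ γ := by rw [hwcost]; exact hηy
  set k := ⌈(2 * (ρ : ℝ)) / μ⌉₊ with hk
  have hμpos : 0 < μ := by linarith
  have hcard_vw : ((T ∆ wstar).card : ℝ) ≤ 2 * (ρ : ℝ) := by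
    have h1 : (T ∆ wstar).card ≤ T.card + wstar.card := by
      calc (T ∆ wstar).card = (T \ wstar).card + (wstar \ T).card :=
            card_symmDiff_split T wstar
        _ ≤ T.card + wstar.card :=
            add_le_add (Finset.card_le_card Finset.sdiff_subset)
              (Finset.card_le_card Finset.sdiff_subset)
    have h2 : T.card ≤ ρ := hρub T hT
    have h3 : wstar.card ≤ ρ := hρub wstar hwstar
    have h4 : (T ∆ wstar).card ≤ 2 * ρ := by omega
    exact_mod_cast h4
  have hηT : η ≤ cost c T := hηlb T hT
  have hkR : (2 * (ρ:ℝ)) / μ ≤ (k:ℝ) := Nat.le_ceil _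
  have hineq : ((T ∆ wstar).card : ℝ) * (cost c T - γ)
      ≤ (k : ℝ) * (cost c T - cost c wstar) := by
    rw [hwcost]
    by_cases hTγ : cost c T ≤ γ
    · have hL : ((T ∆ wstar).card : ℝ) * (cost c T - γ) ≤ 0 :=
        mul_nonpos_of_nonneg_of_nonpos (by positivity) (by linarith)
      have hR : 0 ≤ (k:ℝ) * (cost c T - η) := mul_nonneg (by positivity) (by linarith)
      linarith
    · push_neg at hTγ
      have hμΔ : μ * (cost c T - γ) ≤ cost c T - η := by nlinarith [hTcost]
      have hΔpos : 0 < cost c T - γ := by linarith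
      calc ((T ∆ wstar).card : ℝ) * (cost c T - γ)
          ≤ (2*(ρ:ℝ)) * (cost c T - γ) := mul_le_mul_of_nonneg_right hcard_vw hΔpos.le
        _ ≤ (2*(ρ:ℝ)) * ((cost c T - η)/μ) := by
            refine mul_le_mul_of_nonneg_left ?_ (by positivity)
            rw [le_div_iff₀ hμpos]
            nlinarith [hμΔ]
        _ = ((2*(ρ:ℝ))/μ) * (cost c T - η) := by ring
        _ ≤ (k:ℝ) * (cost c T - η) := mul_le_mul_of_nonneg_right hkR (by linarith)
  obtain ⟨U, hU, hUγ, hreach⟩ :=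
    main_walk hy γ (T ∆ wstar).card T wstar hT hwstar hwγ rfl k hineq
  exact ⟨U, hU, hreach, hUγ⟩
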